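/- Let {Φₙ}, {Δₙ}, {θₙ} be sequences in [0,∞) with Φ_{n+1} ≤ Φₙ + θₙ(Φₙ - Φ_{n-1}) + Δₙ for all n ≥ 1, ∑ Δₙ < ∞, and 0 ≤ θₙ ≤ θ < 1 for all n with some fixed θ. Then ∑_{n≥1} max(Φₙ - Φ_{n-1}, 0) < ∞ and the sequence {Φₙ} converges to some limit Φ* ∈ [0,∞). -/

import Mathlib

/-- Lemma of Alvarez–Attouch on quasi-Fejér type sequences with inertial perturbation. -/
theorem alvarez_attouch_lemma
    (Φ Δ θseq : ℕ → ℝ)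
    (hΦ : ∀ n, 0 ≤ Φ n) (hΔ : ∀ n, 0 ≤ Δ n) (hθnonneg : ∀ n, 0 ≤ θseq n)
    (θ : ℝ) (hθ : θ < 1) (hθle : ∀ n, θseq n ≤ θ)
    (hrec : ∀ n, 1 ≤ n → Φ (n + 1) ≤ Φ n + θseq n * (Φ n - Φ (n - 1)) + Δ n)
    (hsum : Summable Δ) :
    Summable (fun n => max (Φ (n + 1) - Φ n) 0) ∧
      ∃ Φstar : ℝ, 0 ≤ Φstar ∧ Filter.Tendsto Φ Filter.atTop (nhds Φstar) := by
  set d : ℕ → ℝ := fun n => max (Φ (n + 1) - Φ n) 0 with hd_def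
  have hθ0 : 0 ≤ θ := le_trans (hθnonneg 0) (hθle 0)
  have h1θ : 0 < 1 - θ := by linarith
  have hd0 : ∀ n, 0 ≤ d n := fun n => le_max_right _ _
  have hkey : ∀ m, d (m + 1) ≤ θ * d m + Δ (m + 1) := by
    intro m
    have h1 := hrec (m + 1) (by omega)
    simp only [Nat.add_sub_cancel] at h1
    have h3 : θseq (m + 1) * (Φ (m + 1) - Φ m) ≤ θ * d m := by
      calc θseq (m + 1) * (Φ (m + 1) - Φ m) ≤ θseq (m + 1) * d m :=
            mul_le_mul_of_nonneg_left (le_max_left _ _) (hθnonneg _)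
        _ ≤ θ * d m := mul_le_mul_of_nonneg_right (hθle _) (hd0 m)
    have hrhs : 0 ≤ θ * d m + Δ (m + 1) := add_nonneg (mul_nonneg hθ0 (hd0 m)) (hΔ _)
    exact max_le (by linarith) hrhs
  have hTΔ : 0 ≤ ∑' k, Δ k := tsum_nonneg hΔ
  have hΔpart : ∀ s : Finset ℕ, ∑ k ∈ s, Δ k ≤ ∑' k, Δ k :=
    fun s => Summable.sum_le_tsum s (fun k _ => hΔ k) hsum
  have hbound : ∀ N, ∑ n ∈ Finset.range N, d n ≤ (d 0 + ∑' k, Δ k) / (1 - θ) := by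
    intro N
    have hpos : 0 ≤ (d 0 + ∑' k, Δ k) / (1 - θ) :=
      div_nonneg (add_nonneg (hd0 0) hTΔ) (le_of_lt h1θ)
    match N with
    | 0 => simpa using hpos
    | N + 1 =>
      have hsum1 : ∑ n ∈ Finset.range (N + 1), d n
          = (∑ m ∈ Finset.range N, d (m + 1)) + d 0 := Finset.sum_range_succ' d N
      have h2 : ∑ m ∈ Finset.range N, d (m + 1)
          ≤ θ * (∑ m ∈ Finset.range N, d m) + ∑ m ∈ Finset.range N, Δ (m + 1) := by
        rw [Finset.mul_sum, ← Finset.sum_add_distrib]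
        exact Finset.sum_le_sum fun m _ => hkey m
      have h3 : ∑ m ∈ Finset.range N, d m ≤ ∑ n ∈ Finset.range (N + 1), d n := by
        rw [Finset.sum_range_succ]; have := hd0 N; linarith
      have h4 : ∑ m ∈ Finset.range N, Δ (m + 1) ≤ ∑' k, Δ k := by
        have h5 : ∑ m ∈ Finset.range N, Δ (m + 1)
            = ∑ m ∈ (Finset.range N).image (· + 1), Δ m := by
          rw [Finset.sum_image (by intro a _ b _ h; simp only at h; omega)]
        rw [h5]; exact hΔpart _
      have h6 : θ * (∑ m ∈ Finset.range N, d m) ≤ θ * (∑ n ∈ Finset.range (N + 1), d n) :=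
        mul_le_mul_of_nonneg_left h3 hθ0
      have h7 : ∑ n ∈ Finset.range (N + 1), d n
          ≤ θ * (∑ n ∈ Finset.range (N + 1), d n) + (d 0 + ∑' k, Δ k) := by
        rw [hsum1] at h6 ⊢; linarith
      rw [le_div_iff₀ h1θ]
      nlinarith [h7]
  have hdsum : Summable d := summable_of_sum_range_le hd0 hbound
  set T := ∑' n, d n with hT
  have hTpart : ∀ n, ∑ k ∈ Finset.range n, d k ≤ T :=
    fun n => Summable.sum_le_tsum _ (fun k _ => hd0 k) hdsum
  set t : ℕ → ℝ := fun n => Φ n - ∑ k ∈ Finset.range n, d k with ht_def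
  have hanti : Antitone t := antitone_nat_of_succ_le (fun n => by
    have hle : Φ (n + 1) - Φ n ≤ d n := le_max_left _ _
    simp only [ht_def, Finset.sum_range_succ]
    linarith)
  have hbdd : BddBelow (Set.range t) := by
    refine ⟨-T, ?_⟩
    rintro _ ⟨n, rfl⟩
    have h1 := hΦ n
    have h2 := hTpart n
    simp only [ht_def]
    linarith
  have htlim : Filter.Tendsto t Filter.atTop (nhds (⨅ n, t n)) :=
    tendsto_atTop_ciInf hanti hbdd
  have hslim : Filter.Tendsto (fun n => ∑ k ∈ Finset.range n, d k) Filter.atTop (nhds T) :=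
    hdsum.hasSum.tendsto_sum_nat
  have hΦtend : Filter.Tendsto Φ Filter.atTop (nhds ((⨅ n, t n) + T)) := by
    have h := htlim.add hslim
    refine h.congr fun n => ?_
    simp [ht_def]
  refine ⟨hdsum, (⨅ n, t n) + T, ?_, hΦtend⟩
  exact ge_of_tendsto' hΦtend hΦ
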